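/- Let R be an integral domain in which 2 is invertible and let A be an R-algebra, free of rank 4 as an R-module, with a quaternion structure given by a submodule S (so A = R·1 ⊕ S internally and x·x ∈ R·1 for all x ∈ S). Then the set { a ∈ A : a·a ∈ R·1 } equals the union of R·1 and S. Consequently the submodule S is uniquely determined: if S' is another submodule with A = R·1 ⊕ S' and x·x ∈ R·1 for all x ∈ S', then S' = S. -/

import Mathlib

/-- For a quaternion structure `S` on an algebra `A` free of rank 4
over a domain `R` with 2 invertible, the set `{a | a² ∈ R·1}` is exactly `R·1 ∪ S`;
consequently the trace-zero part `S` is uniquely determined. -/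
theorem stmt5 (R A : Type*) [CommRing R] [IsDomain R] [Invertible (2 : R)]
    [Ring A] [Algebra R A] [Module.Free R A] (hrank : Module.finrank R A = 4)
    (S : Submodule R A)
    (hcompl : IsCompl (1 : Submodule R A) S)
    (hsq : ∀ x ∈ S, x * x ∈ (1 : Submodule R A)) :
    ({a : A | a * a ∈ (1 : Submodule R A)}
        = ((1 : Submodule R A) : Set A) ∪ (S : Set A)) ∧
    ∀ S' : Submodule R A,
      IsCompl (1 : Submodule R A) S' →
      (∀ x ∈ S', x * x ∈ (1 : Submodule R A)) → S' = S := by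
  -- `R·1` is not the whole algebra
  have hone_ne_top : (1 : Submodule R A) ≠ ⊤ := by
    intro h
    have h1 : Module.finrank R ↥(LinearMap.range (Algebra.linearMap R A))
        ≤ Module.finrank R R := LinearMap.finrank_range_le _
    rw [← Submodule.one_eq_range, h, finrank_top, hrank, Module.finrank_self] at h1
    omega
  -- the key set equality
  have key : {a : A | a * a ∈ (1 : Submodule R A)}
      = ((1 : Submodule R A) : Set A) ∪ (S : Set A) := by
    ext a
    simp only [Set.mem_setOf_eq, Set.mem_union, SetLike.mem_coe]
    constructor
    · intro ha
      obtain ⟨u, v, hu, hv, rfl⟩ :=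
        Submodule.codisjoint_iff_exists_add_eq.mp hcompl.codisjoint a
      obtain ⟨r, rfl⟩ := Submodule.mem_one.mp hu
      have hexp : (algebraMap R A r + v) * (algebraMap R A r + v)
          = algebraMap R A (r * r) + ((2 * r) • v + v * v) := by
        rw [add_mul, mul_add, mul_add, ← map_mul, ← Algebra.commutes r v,
          ← Algebra.smul_def, mul_smul, two_smul]
        abel
      have hmemS : (2 * r) • v ∈ S := S.smul_mem _ hv
      have hmem1 : (2 * r) • v ∈ (1 : Submodule R A) := by
        have h1 : ((2 * r) • v)
            = (algebraMap R A r + v) * (algebraMap R A r + v)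
              - algebraMap R A (r * r) - v * v := by
          rw [hexp]; abel
        rw [h1]
        exact Submodule.sub_mem _
          (Submodule.sub_mem _ ha (Submodule.mem_one.mpr ⟨r * r, rfl⟩)) (hsq v hv)
      have hzero : (2 * r) • v = 0 :=
        Submodule.disjoint_def.mp hcompl.disjoint _ hmem1 hmemS
      rcases smul_eq_zero.mp hzero with h | h
      · rcases mul_eq_zero.mp h with h2 | hr
        · exact absurd h2 (Invertible.ne_zero (2 : R))
        · right
          rw [hr, map_zero, zero_add]
          exact hv
      · left
        rw [h, add_zero]
        exact Submodule.mem_one.mpr ⟨r, rfl⟩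
    · rintro (ha | ha)
      · obtain ⟨r, rfl⟩ := Submodule.mem_one.mp ha
        exact Submodule.mem_one.mpr ⟨r * r, (map_mul (algebraMap R A) _ _)⟩
      · exact hsq a ha
  refine ⟨key, fun S' hcompl' hsq' => ?_⟩
  -- S' ⊆ R·1 ∪ S
  have hsub : ∀ x ∈ S', x ∈ (1 : Submodule R A) ∨ x ∈ S := by
    intro x hx
    have : x ∈ {a : A | a * a ∈ (1 : Submodule R A)} := hsq' x hx
    rw [key] at this
    exact this
  -- S' ≤ S
  have hSS : S' ≤ S := by
    by_contra hns
    obtain ⟨x, hxS', hxS⟩ := SetLike.not_le_iff_exists.mp hns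
    have hx1 : x ∈ (1 : Submodule R A) := (hsub x hxS').resolve_right hxS
    have hle : S' ≤ (1 : Submodule R A) := by
      intro y hy
      rcases hsub y hy with h | h
      · exact h
      · rcases hsub (x + y) (S'.add_mem hxS' hy) with h2 | h2
        · have : y ∈ (1 : Submodule R A) := by
            have := Submodule.sub_mem _ h2 hx1
            simpa using this
          exact this
        · exact absurd (by simpa using S.sub_mem h2 h) hxS
    have : (1 : Submodule R A) = ⊤ := by
      rw [← top_le_iff, ← hcompl'.codisjoint.eq_top]
      exact sup_le le_rfl hle
    exact hone_ne_top this
  -- modularity finishes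
  have : S = S' := by
    calc S = ⊤ ⊓ S := (top_inf_eq S).symm
    _ = (S' ⊔ 1) ⊓ S := by rw [sup_comm, hcompl'.codisjoint.eq_top]
    _ = S' ⊔ (1 ⊓ S) := sup_inf_assoc_of_le _ hSS
    _ = S' := by rw [hcompl.disjoint.eq_bot, sup_bot_eq]
  exact this.symm
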